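/- (Core estimate of Lemma 5.5, tail part.) Let γ > 1. There is a constant c > 0 such that for all real x' with |x'| sufficiently large, ∫_{|x'|^{1/γ} + A}^{∞} r^{γ-1}/(r^γ - |x'|)² dr ≤ c |x'|^{-1 + 1/γ}, where A > 0 is a fixed constant (depending only on γ) guaranteeing r^γ - |x'| ≥ (γ/2) A (r - A)^{γ-1} > 0 on the integration domain. -/

import Mathlib

open MeasureTheory Set Filter Topology

theorem stmt12 (γ A : ℝ) (hγ : 1 < γ) (hA : 0 < A) :
    ∃ c > (0:ℝ), ∃ M : ℝ, ∀ x' : ℝ, M ≤ |x'| →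
      (∫ r in Set.Ioi (|x'| ^ (1/γ) + A), r ^ (γ - 1) / (r ^ γ - |x'|) ^ 2) ≤
        c * |x'| ^ (-1 + 1/γ) := by
  have hγ0 : (0:ℝ) < γ := by linarith
  refine ⟨(γ^2 * A)⁻¹, by positivity, 1, fun x' hx' => ?_⟩
  set b := |x'| with hbdef
  have hb1 : (1:ℝ) ≤ b := hx'
  have hb0 : (0:ℝ) ≤ b := by linarith
  set s := b ^ (1/γ) with hsdef
  have hs1 : (1:ℝ) ≤ s := Real.one_le_rpow hb1 (by positivity)
  have hs0 : (0:ℝ) < s := by linarith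
  set a := s + A with hadef
  have hsa : s < a := by rw [hadef]; linarith
  have ha0 : (0:ℝ) < a := by linarith
  have hsγ : s ^ γ = b := by
    rw [hsdef, ← Real.rpow_mul hb0, one_div_mul_cancel (ne_of_gt hγ0), Real.rpow_one]
  -- mean value theorem lower bound on a^γ - b
  obtain ⟨ξ, hξ, hξ'⟩ := exists_hasDerivAt_eq_slope (fun x => x ^ γ)
      (fun x => γ * x ^ (γ - 1)) hsa
      (fun x hx => (Real.continuousAt_rpow_const x γ
        (Or.inl (by nlinarith [hx.1]))).continuousWithinAt)
      (fun x hx => Real.hasDerivAt_rpow_const (Or.inl (by nlinarith [hx.1.le])))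
  have hξs : s ^ (γ - 1) ≤ ξ ^ (γ - 1) :=
    Real.rpow_le_rpow hs0.le hξ.1.le (by linarith)
  have hslope : a ^ γ - b = A * (γ * ξ ^ (γ - 1)) := by
    have : γ * ξ ^ (γ - 1) = (a ^ γ - s ^ γ) / (a - s) := hξ'
    rw [hsγ] at this
    have hAs : a - s = A := by rw [hadef]; ring
    rw [hAs] at this
    field_simp at this
    linarith [this]
  have hD : A * γ * s ^ (γ - 1) ≤ a ^ γ - b := by
    rw [hslope]
    have : (0:ℝ) ≤ A * γ := by positivity
    nlinarith [hξs, Real.rpow_nonneg hs0.le (γ - 1)]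
  have hDpos : (0:ℝ) < a ^ γ - b := by
    have hsp : (0:ℝ) < s ^ (γ - 1) := Real.rpow_pos_of_pos hs0 _
    have : (0:ℝ) < A * γ * s ^ (γ - 1) := by positivity
    linarith
  -- compute the integral via antiderivative
  set F : ℝ → ℝ := fun x => -(γ⁻¹ * (x ^ γ - b)⁻¹) with hF
  have hxpos : ∀ x ∈ Ici a, (0:ℝ) < x := fun x hx => lt_of_lt_of_le ha0 hx
  have hxne : ∀ x ∈ Ici a, x ^ γ - b ≠ 0 := by
    intro x hx
    have : a ^ γ ≤ x ^ γ := Real.rpow_le_rpow ha0.le hx hγ0.le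
    nlinarith
  have hderiv : ∀ x ∈ Ioi a, HasDerivAt F (x ^ (γ - 1) / (x ^ γ - b) ^ 2) x := by
    intro x hx
    have hx' : x ∈ Ici a := Set.mem_Ici.mpr (le_of_lt (Set.mem_Ioi.mp hx))
    have h1 : HasDerivAt (fun y : ℝ => y ^ γ - b) (γ * x ^ (γ - 1)) x :=
      (Real.hasDerivAt_rpow_const (Or.inl (hxpos x hx').ne')).sub_const b
    have h3 := (h1.inv (hxne x hx')).const_mul γ⁻¹
    have h4 := h3.neg
    have heq : -(γ⁻¹ * (-(γ * x ^ (γ - 1)) / (x ^ γ - b) ^ 2)) =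
        x ^ (γ - 1) / (x ^ γ - b) ^ 2 := by
      rw [neg_div, mul_neg, neg_neg, mul_div_assoc, ← mul_assoc,
        inv_mul_cancel₀ hγ0.ne', one_mul]
    exact heq ▸ h4
  have hcont : ContinuousOn F (Ici a) := by
    intro x hx
    exact (((((Real.continuousAt_rpow_const x γ (Or.inl (hxpos x hx).ne')).sub
      continuousAt_const).inv₀ (hxne x hx)).const_smul γ⁻¹).neg).continuousWithinAt
  have htends : Tendsto F atTop (𝓝 0) := by
    have h1 : Tendsto (fun x : ℝ => x ^ γ - b) atTop atTop :=
      (tendsto_atTop_add_const_right _ (-b) (tendsto_rpow_atTop hγ0))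
    have h2 : Tendsto (fun x : ℝ => (x ^ γ - b)⁻¹) atTop (𝓝 0) := h1.inv_tendsto_atTop
    have h3 := (h2.const_mul γ⁻¹).neg
    simpa using h3
  have hnonneg : ∀ x ∈ Ioi a, (0:ℝ) ≤ x ^ (γ - 1) / (x ^ γ - b) ^ 2 := by
    intro x hx
    have : (0:ℝ) < x := hxpos x (Set.mem_Ici.mpr (le_of_lt (Set.mem_Ioi.mp hx)))
    positivity
  have hint : (∫ r in Set.Ioi a, r ^ (γ - 1) / (r ^ γ - b) ^ 2) = 0 - F a :=
    integral_Ioi_of_hasDerivAt_of_nonneg (hcont a Set.self_mem_Ici) hderiv hnonneg htends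
  rw [hint]
  have hFa : 0 - F a = γ⁻¹ * (a ^ γ - b)⁻¹ := by simp [hF]
  rw [hFa]
  -- final bound
  have hrhs : b ^ (-1 + 1/γ) = (s ^ (γ - 1))⁻¹ := by
    rw [hsdef, ← Real.rpow_mul hb0, ← Real.rpow_neg hb0]
    congr 1
    field_simp
    ring
  rw [hrhs]
  have hsp : (0:ℝ) < s ^ (γ - 1) := Real.rpow_pos_of_pos hs0 _
  have h1 : (a ^ γ - b)⁻¹ ≤ (A * γ * s ^ (γ - 1))⁻¹ :=
    inv_anti₀ (by positivity) hD
  calc γ⁻¹ * (a ^ γ - b)⁻¹ ≤ γ⁻¹ * (A * γ * s ^ (γ - 1))⁻¹ := by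
        apply mul_le_mul_of_nonneg_left h1 (by positivity)
    _ = (γ ^ 2 * A)⁻¹ * (s ^ (γ - 1))⁻¹ := by
        field_simp
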